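/- Let A ∈ ℝmax^{n×n} be irreducible and let C, S, R be the CSR terms of A with respect to a completely reducible subgraph 𝒢 of the critical graph 𝒞(A) with no trivial s.c.c. Then the sequence of matrices (CS^tR)_{t≥0} is purely periodic: CS^{t+γ(𝒢)}R = CS^tR for all t ≥ 0. -/

import Mathlib

open Classical

noncomputable section

namespace MaxPlus

/-- A square matrix over the max-plus semiring `ℝmax = ℝ ∪ {-∞}`,
represented as `WithBot ℝ` (with `⊥ = -∞`, `+` the usual addition). -/
abbrev MPMat (n : ℕ) := Fin n → Fin n → WithBot ℝ

variable {n : ℕ}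

/-- Max-plus matrix multiplication: `(A⊗B)_{ij} = max_k (a_{ik} + b_{kj})`. -/
def mpMul (A B : MPMat n) : MPMat n := fun i j => Finset.univ.sup fun k => A i k + B k j

/-- Max-plus matrix power, with `A^0` the max-plus identity. -/
def mpPow (A : MPMat n) : ℕ → MPMat n
  | 0 => fun i j => if i = j then (0 : WithBot ℝ) else ⊥
  | t + 1 => mpMul A (mpPow A t)

/-- Max-plus matrix-vector product. -/
def mpMulVec (A : MPMat n) (x : Fin n → WithBot ℝ) : Fin n → WithBot ℝ :=
  fun i => Finset.univ.sup fun k => A i k + x k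

/-- A digraph on the node set `{1,…,n}`: a set of vertices together with an
edge relation. -/
structure SubD (n : ℕ) where
  verts : Set (Fin n)
  edge : Fin n → Fin n → Prop

/-- The weighted digraph `𝒟(A)` of a max-plus matrix: all `n` nodes, with an
edge `(i,j)` whenever `a_{ij} ≠ -∞`. -/
def digr (A : MPMat n) : SubD n := ⟨Set.univ, fun i j => A i j ≠ ⊥⟩

/-- `W` (a nonempty list of nodes) is a walk in the digraph `G`. -/
def IsWalkIn (G : SubD n) (W : List (Fin n)) : Prop :=
  W ≠ [] ∧ (∀ v ∈ W, v ∈ G.verts) ∧ W.Chain' G.edge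

/-- The length of a walk: its number of edges (number of nodes minus one). -/
def elen (W : List (Fin n)) : ℕ := W.length - 1

/-- The weight `p(W)` of a walk: sum of the weights of its edges. -/
def walkWeight (A : MPMat n) (W : List (Fin n)) : WithBot ℝ :=
  ((W.zip W.tail).map fun p => A p.1 p.2).sum

/-- `W` is a cycle in `G`: a nonempty closed walk with pairwise distinct
nodes (apart from the repeated endpoint). -/
def IsCycleIn (G : SubD n) (W : List (Fin n)) : Prop :=
  IsWalkIn G W ∧ 2 ≤ W.length ∧ W.head? = W.getLast? ∧ W.dropLast.Nodup

/-- `W` is a path in `G`: a walk with no repeated node. -/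
def IsPathIn (G : SubD n) (W : List (Fin n)) : Prop :=
  IsWalkIn G W ∧ W.Nodup

/-- `v` is reachable from `u` by a (possibly empty) walk in `G`. -/
def ReachIn (G : SubD n) (u v : Fin n) : Prop :=
  ∃ W, IsWalkIn G W ∧ W.head? = some u ∧ W.getLast? = some v

/-- `u` and `v` lie in the same strongly connected component of `G`. -/
def SccEq (G : SubD n) (u v : Fin n) : Prop := ReachIn G u v ∧ ReachIn G v u

/-- The node set of the s.c.c. of `u` in `G`. -/
def sccOf (G : SubD n) (u : Fin n) : Set (Fin n) := {v | SccEq G u v}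

/-- The s.c.c. of `u` in `G`, as a digraph. -/
def sccSub (G : SubD n) (u : Fin n) : SubD n :=
  ⟨sccOf G u, fun a b => G.edge a b ∧ a ∈ sccOf G u ∧ b ∈ sccOf G u⟩

/-- `H` is a subgraph of `G`. -/
def SubLE (H G : SubD n) : Prop := H.verts ⊆ G.verts ∧ ∀ u v, H.edge u v → G.edge u v

/-- `G` is completely reducible: there are no edges between distinct s.c.c.'s,
i.e. every edge lies inside an s.c.c. -/
def CompletelyReducible (G : SubD n) : Prop := ∀ u v, G.edge u v → ReachIn G v u

/-- `G` has no trivial s.c.c.: every node lies on a cycle of `G`. -/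
def NoTrivialScc (G : SubD n) : Prop := ∀ v ∈ G.verts, ∃ W, IsCycleIn G W ∧ v ∈ W

/-- `A` is irreducible: `𝒟(A)` is strongly connected. -/
def IrreducibleMat (A : MPMat n) : Prop := ∀ i j : Fin n, ReachIn (digr A) i j

/-- `W` is a closed walk at node `v` in `G`. -/
def IsClosedWalkAt (G : SubD n) (v : Fin n) (W : List (Fin n)) : Prop :=
  IsWalkIn G W ∧ W.head? = some v ∧ W.getLast? = some v

/-- The greatest common divisor of a set of naturals (0 for the empty set). -/
def setGcd (S : Set ℕ) : ℕ :=
  sInf {d | (∀ s ∈ S, d ∣ s) ∧ ∀ e, (∀ s ∈ S, e ∣ s) → e ∣ d}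

/-- The least common multiple of a set of naturals: the least positive common
multiple (0 if there is none). -/
def setLcm (S : Set ℕ) : ℕ := sInf {m | 0 < m ∧ ∀ s ∈ S, s ∣ m}

/-- The cyclicity of the s.c.c. of `v` in `G`: the gcd of the lengths of the
closed walks of `G` through `v` (0 if `v` lies on no nonempty closed walk). -/
def sccCyclicity (G : SubD n) (v : Fin n) : ℕ :=
  setGcd {l | 0 < l ∧ ∃ W, IsClosedWalkAt G v W ∧ elen W = l}

/-- The cyclicity of a digraph: the lcm of the cyclicities of its
(nontrivial) s.c.c.'s. -/
def graphCyclicity (G : SubD n) : ℕ :=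
  setLcm {c | ∃ v ∈ G.verts, c = sccCyclicity G v ∧ 0 < c}

/-- The walk `W` has mean weight `m`, i.e. `p(W) = l(W)·m` (finitely). -/
def meanIs (A : MPMat n) (W : List (Fin n)) (m : ℝ) : Prop :=
  walkWeight A W = (((elen W : ℝ) * m : ℝ) : WithBot ℝ)

/-- `lam` is the maximum cycle mean `λ(A)` of `A`: it is the mean of some
cycle of `𝒟(A)` and no cycle has a larger mean.  (Its existence is
equivalent to `𝒟(A)` containing a cycle, i.e. `λ(A) ≠ -∞`.) -/
def IsMaxCycleMean (A : MPMat n) (lam : ℝ) : Prop :=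
  (∃ W, IsCycleIn (digr A) W ∧ meanIs A W lam) ∧
  ∀ W m, IsCycleIn (digr A) W → meanIs A W m → m ≤ lam

/-- The set of critical nodes: nodes on some cycle of mean `λ(A)`. -/
def critNodes (A : MPMat n) (lam : ℝ) : Set (Fin n) :=
  {v | ∃ W, IsCycleIn (digr A) W ∧ meanIs A W lam ∧ v ∈ W}

/-- Critical edges: edges of some cycle of mean `λ(A)`. -/
def critEdges (A : MPMat n) (lam : ℝ) (u v : Fin n) : Prop :=
  ∃ W, IsCycleIn (digr A) W ∧ meanIs A W lam ∧ (u, v) ∈ W.zip W.tail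

/-- The critical graph `𝒞(A)`. -/
def critSub (A : MPMat n) (lam : ℝ) : SubD n := ⟨critNodes A lam, critEdges A lam⟩

/-- Add the real constant `c` to every entry. -/
def shiftMat (A : MPMat n) (c : ℝ) : MPMat n := fun i j => A i j + (c : WithBot ℝ)

/-- The max-plus Kleene star `X^* = I ⊕ X ⊕ X² ⊕ ⋯` (entrywise supremum). -/
def mpStar (X : MPMat n) : MPMat n := fun i j => ⨆ t : ℕ, mpPow X t i j

/-- The matrix `M = (((-λ)⊗A)^{γ(𝒢)})^*` used to define the CSR terms. -/
def csrM (A : MPMat n) (lam : ℝ) (G : SubD n) : MPMat n :=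
  mpStar (mpPow (shiftMat A (-lam)) (graphCyclicity G))

/-- The `C` term of the CSR expansion of `A` w.r.t. the subgraph `G`. -/
def csrC (A : MPMat n) (lam : ℝ) (G : SubD n) : MPMat n :=
  fun i j => if j ∈ G.verts then csrM A lam G i j else ⊥

/-- The `R` term of the CSR expansion of `A` w.r.t. the subgraph `G`. -/
def csrR (A : MPMat n) (lam : ℝ) (G : SubD n) : MPMat n :=
  fun i j => if i ∈ G.verts then csrM A lam G i j else ⊥

/-- The `S` term of the CSR expansion of `A` w.r.t. the subgraph `G`. -/
def csrS (A : MPMat n) (lam : ℝ) (G : SubD n) : MPMat n :=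
  fun i j => if G.edge i j then A i j + ((-lam : ℝ) : WithBot ℝ) else ⊥

/-- The matrix `C S^t R`. -/
def csr (A : MPMat n) (lam : ℝ) (G : SubD n) (t : ℕ) : MPMat n :=
  mpMul (mpMul (csrC A lam G) (mpPow (csrS A lam G) t)) (csrR A lam G)

/-- `G` is a representing subgraph of the critical graph `crit`: a completely
reducible subgraph (with no trivial s.c.c.) such that every s.c.c. of `crit`
contains exactly one s.c.c. of `G`. -/
structure IsRepresenting (crit G : SubD n) : Prop where
  le : SubLE G crit
  compRed : CompletelyReducible G
  noTriv : NoTrivialScc G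
  covers : ∀ u ∈ crit.verts, ∃ v ∈ G.verts, SccEq crit u v
  unique : ∀ v ∈ G.verts, ∀ w ∈ G.verts, SccEq crit v w → SccEq G v w

/-- `B` is subordinate to `A`: obtained from `A` by setting some entries to `-∞`. -/
def Subordinate (B A : MPMat n) : Prop := ∀ i j, B i j = A i j ∨ B i j = ⊥

/-- Set to `-∞` all entries in the rows and columns indexed by `S`. -/
def zeroRC (A : MPMat n) (S : Set (Fin n)) : MPMat n :=
  fun i j => if i ∈ S ∨ j ∈ S then ⊥ else A i j

/-- The Nachtigall scheme: zero out the rows and columns of critical nodes. -/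
def bN (A : MPMat n) (lam : ℝ) : MPMat n := zeroRC A (critNodes A lam)

/-- `V` is a max-balancing of `A`: `V = D⁻¹((-λ(A))⊗A)D` with all entries `≤ 0`,
entries `0` on critical edges, and every edge of `𝒟(V)` lies on a cycle all of
whose edges have weight at least that of the given edge (cycle cover). -/
def IsMaxBalancing (A : MPMat n) (lam : ℝ) (V : MPMat n) : Prop :=
  (∃ d : Fin n → ℝ, ∀ i j, V i j = A i j + ((d j - d i - lam : ℝ) : WithBot ℝ)) ∧
  (∀ i j, V i j ≤ (0 : WithBot ℝ)) ∧
  (∀ i j, critEdges A lam i j → V i j = (0 : WithBot ℝ)) ∧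
  (∀ i j, V i j ≠ ⊥ →
    ∃ W, IsCycleIn (digr V) W ∧ (i, j) ∈ W.zip W.tail ∧ ∀ p ∈ W.zip W.tail, V i j ≤ V p.1 p.2)

/-- The Hartmann-Arguelles threshold graph `Θ^{ha}(μ)`: induced by the edges
with `v_{ij} ≥ μ`; by convention `Θ^{ha}(-∞) = 𝒟(A)`. -/
def thrHA (A V : MPMat n) (μ : WithBot ℝ) : SubD n :=
  if μ = ⊥ then digr A
  else ⟨{u | ∃ w, μ ≤ V u w ∨ μ ≤ V w u}, fun u v => μ ≤ V u v⟩

/-- The cycle threshold graph `Θ^{ct}(μ)`: induced by all nodes and edges of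
cycles of mean weight `≥ μ`; by convention `Θ^{ct}(-∞) = 𝒟(A)`. -/
def thrCT (A : MPMat n) (μ : WithBot ℝ) : SubD n :=
  if μ = ⊥ then digr A
  else ⟨{v | ∃ W m, IsCycleIn (digr A) W ∧ meanIs A W m ∧ μ ≤ (m : WithBot ℝ) ∧ v ∈ W},
        fun u v => ∃ W m, IsCycleIn (digr A) W ∧ meanIs A W m ∧ μ ≤ (m : WithBot ℝ) ∧
          (u, v) ∈ W.zip W.tail⟩

/-- `Θ` has an s.c.c. containing no s.c.c. of `crit`. -/
def HasFreeScc (Θ crit : SubD n) : Prop :=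
  ∃ u ∈ Θ.verts, ¬ ∃ w ∈ crit.verts, sccOf crit w ⊆ sccOf Θ u

/-- `μ` is the greatest value `≤ λ(A)` satisfying `P` (or `-∞` if there is
no such value). -/
def IsThrMax (P : WithBot ℝ → Prop) (lam : ℝ) (μ : WithBot ℝ) : Prop :=
  (μ ≤ (lam : WithBot ℝ) ∧ P μ ∧ ∀ μ', μ' ≤ (lam : WithBot ℝ) → P μ' → μ' ≤ μ) ∨
  (μ = ⊥ ∧ ∀ μ', μ' ≤ (lam : WithBot ℝ) → ¬ P μ')

/-- `μ = μ^{ha}` for the max-balancing `V` of `A`. -/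
def IsMuHA (A : MPMat n) (lam : ℝ) (V : MPMat n) (μ : WithBot ℝ) : Prop :=
  IsThrMax (fun m => HasFreeScc (thrHA A V m) (critSub A lam)) lam μ

/-- `μ = μ^{ct}` for `A`. -/
def IsMuCT (A : MPMat n) (lam : ℝ) (μ : WithBot ℝ) : Prop :=
  IsThrMax (fun m => HasFreeScc (thrCT A m) (critSub A lam)) lam μ

/-- The union of the s.c.c.'s of `Θ` intersecting the node set `crit`. -/
def unionSccMeeting (Θ : SubD n) (crit : Set (Fin n)) : Set (Fin n) :=
  {v | v ∈ Θ.verts ∧ ∃ w ∈ crit, SccEq Θ v w}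

/-- The node set `𝒢^{ha}` of the Hartmann-Arguelles scheme. -/
def haNodes (A V : MPMat n) (lam : ℝ) (μ : WithBot ℝ) : Set (Fin n) :=
  unionSccMeeting (thrHA A V μ) (critNodes A lam)

/-- The matrix `B^{HA}` of the Hartmann-Arguelles scheme. -/
def bHA (A V : MPMat n) (lam : ℝ) (μ : WithBot ℝ) : MPMat n :=
  zeroRC A (haNodes A V lam μ)

/-- The node set `𝒢^{ct}` of the cycle threshold scheme. -/
def ctNodes (A : MPMat n) (lam : ℝ) (μ : WithBot ℝ) : Set (Fin n) :=
  unionSccMeeting (thrCT A μ) (critNodes A lam)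

/-- The matrix `B^{ct}` of the cycle threshold scheme. -/
def bCT (A : MPMat n) (lam : ℝ) (μ : WithBot ℝ) : MPMat n :=
  zeroRC A (ctNodes A lam μ)

/-- The graph `𝒢^{ct}`: the union of the s.c.c.'s of `Θ^{ct}(μ^{ct})`
intersecting `𝒞(A)`, as a digraph. -/
def ctSub (A : MPMat n) (lam : ℝ) (μ : WithBot ℝ) : SubD n :=
  ⟨ctNodes A lam μ,
   fun u v => (thrCT A μ).edge u v ∧ u ∈ ctNodes A lam μ ∧ v ∈ ctNodes A lam μ⟩

/-- The circumference of `G`: the greatest length of a cycle of `G`. -/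
def circumf (G : SubD n) : ℕ := sSup {l | ∃ W, IsCycleIn G W ∧ W.length = l + 1}

/-- The cab driver's diameter of `G`: the greatest length of a path of `G`. -/
def cabDiam (G : SubD n) : ℕ := sSup {l | ∃ W, IsPathIn G W ∧ W.length = l + 1}

/-- The girth of the s.c.c. of `v` in `G`: the least length of a cycle lying
in the s.c.c. of `v`. -/
def sccGirth (G : SubD n) (v : Fin n) : ℕ :=
  sInf {l | 0 < l ∧ ∃ W, IsCycleIn G W ∧ W.length = l + 1 ∧ ∀ u ∈ W, SccEq G v u}

/-- The max-girth of `G`: the greatest girth of an s.c.c. of `G`. -/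
def maxGirth (G : SubD n) : ℕ := sSup {g | ∃ v ∈ G.verts, 0 < g ∧ g = sccGirth G v}

/-- The max-cyclicity of `G`: the greatest cyclicity of an s.c.c. of `G`. -/
def maxCyclicity (G : SubD n) : ℕ := sSup {c | ∃ v ∈ G.verts, 0 < c ∧ c = sccCyclicity G v}

/-- The Wielandt number: `Wi(n) = (n-1)² + 1` for `n > 1`, `Wi(1) = 0`. -/
def wielandt (k : ℕ) : ℕ := if k ≤ 1 then 0 else (k - 1) ^ 2 + 1

/-- The set of finite entries of `A`. -/
def finEntries (A : MPMat n) : Set ℝ := {x | ∃ i j, A i j = (x : WithBot ℝ)}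

/-- The least finite entry of `A`. -/
def minEnt (A : MPMat n) : ℝ := sInf (finEntries A)

/-- The greatest finite entry of `A`. -/
def maxEnt (A : MPMat n) : ℝ := sSup (finEntries A)

/-- `‖A‖`: the difference between the greatest and least finite entries. -/
def matNorm (A : MPMat n) : ℝ := maxEnt A - minEnt A

/-- `n_B`: the size of the smallest square submatrix of `B` containing all
finite entries of `B`. -/
def nB (B : MPMat n) : ℕ := Set.ncard {i | ∃ j, B i j ≠ ⊥ ∨ B j i ≠ ⊥}

/-- `‖v‖`: the difference between the greatest and least entries of `v`. -/
def vecNorm (v : Fin n → ℝ) : ℝ := sSup (Set.range v) - sInf (Set.range v)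

/-- The exploration penalty `ep^γ(i)` (w.r.t. the graph `crit`): the least `T`
such that for every multiple `t` of `γ` with `t ≥ T` there is a closed walk of
length `t` at `i` in `crit`. -/
def epAt (crit : SubD n) (γ : ℕ) (i : Fin n) : ℕ :=
  sInf {T | ∀ t, γ ∣ t → T ≤ t → ∃ W, IsClosedWalkAt crit i W ∧ elen W = t}

/-- The exploration penalty `ep^γ(S)`: the maximum of `ep^γ(i)` over `i ∈ S`. -/
def epOn (crit : SubD n) (γ : ℕ) (S : Set (Fin n)) : ℕ := sSup {e | ∃ i ∈ S, e = epAt crit γ i}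

/-- `ep(𝒞(A))`: the maximum over the s.c.c.'s `𝒞_l` of `crit` of
`ep^{γ(𝒞_l)}(𝒞_l)`. -/
def epCrit (crit : SubD n) : ℕ :=
  sSup {e | ∃ i ∈ crit.verts, e = epAt crit (sccCyclicity crit i) i}

/-- The weak CSR expansion `A^t = λ^{⊗t}⊗(CS^tR) ⊕ B^t` holds at time `t`
(with CSR terms taken w.r.t. the subgraph `G`). -/
def weakCSReq (A B : MPMat n) (lam : ℝ) (G : SubD n) (t : ℕ) : Prop :=
  ∀ i j, mpPow A t i j = max (csr A lam G t i j + (((t : ℝ) * lam : ℝ) : WithBot ℝ)) (mpPow B t i j)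

/-- The domination `λ^{⊗t}⊗(CS^tR) ≥ B^t` holds at time `t`. -/
def T2eq (A B : MPMat n) (lam : ℝ) (G : SubD n) (t : ℕ) : Prop :=
  ∀ i j, mpPow B t i j ≤ csr A lam G t i j + (((t : ℝ) * lam : ℝ) : WithBot ℝ)

/-- The domination `λ^{⊗t}⊗(CS^tRv) ≥ B^t v` holds at time `t`. -/
def T2veq (A B : MPMat n) (lam : ℝ) (G : SubD n) (v : Fin n → ℝ) (t : ℕ) : Prop :=
  ∀ i, mpMulVec (mpPow B t) (fun j => (v j : WithBot ℝ)) i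
      ≤ mpMulVec (csr A lam G t) (fun j => (v j : WithBot ℝ)) i + (((t : ℝ) * lam : ℝ) : WithBot ℝ)

/-- One step of removing a (nonempty) closed subwalk from a walk. -/
def RemoveStep (W V : List (Fin n)) : Prop :=
  ∃ (pre mid post : List (Fin n)) (x : Fin n),
    W = pre ++ x :: mid ++ x :: post ∧ V = pre ++ x :: post

/-- One step of inserting a cycle of `C` into a walk (at an occurrence of a
node of that cycle). -/
def InsertStep (C : SubD n) (W V : List (Fin n)) : Prop :=
  ∃ (pre post mid : List (Fin n)) (x : Fin n),
    W = pre ++ x :: post ∧ V = pre ++ x :: mid ++ x :: post ∧ IsCycleIn C (x :: mid ++ [x])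

/-- `V` is obtained from `W` by removing cycles. -/
def RemOnly : List (Fin n) → List (Fin n) → Prop := Relation.ReflTransGen RemoveStep

/-- `V` is obtained from `W` by removing cycles and possibly inserting cycles
of `C`. -/
def RemIns (C : SubD n) : List (Fin n) → List (Fin n) → Prop :=
  Relation.ReflTransGen fun W V => RemoveStep W V ∨ InsertStep C W V

/-- `V` is obtained from `W` by removing at least one cycle and possibly
inserting cycles of `C`. -/
def RemInsStrict (C : SubD n) (W V : List (Fin n)) : Prop :=
  ∃ W₁ W₂, RemIns C W W₁ ∧ RemoveStep W₁ W₂ ∧ RemIns C W₂ V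

/-- `T` witnesses the cycle removal threshold `T_cr^γ(C) ≤ T` in the digraph
`G`: every walk of `G` through `C` of length `≥ T` can be reduced (removing
cycles, possibly inserting cycles of `C`) to a walk through `C` with the same
endpoints, the same length mod `γ`, and length `≤ T`. -/
def TcrProp (G C : SubD n) (γ T : ℕ) : Prop :=
  ∀ W, IsWalkIn G W → (∃ v ∈ C.verts, v ∈ W) → T ≤ elen W →
    ∃ V, RemIns C W V ∧ IsWalkIn G V ∧ (∃ v ∈ C.verts, v ∈ V) ∧
      V.head? = W.head? ∧ V.getLast? = W.getLast? ∧ elen V ≡ elen W [MOD γ] ∧ elen V ≤ T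

/-- `T` witnesses the strict cycle removal threshold `T̃_cr^γ(C) ≤ T`. -/
def TcrStrictProp (G C : SubD n) (γ T : ℕ) : Prop :=
  ∀ W, IsWalkIn G W → (∃ v ∈ C.verts, v ∈ W) → T ≤ elen W →
    ∃ V, RemInsStrict C W V ∧ IsWalkIn G V ∧ (∃ v ∈ C.verts, v ∈ V) ∧
      V.head? = W.head? ∧ V.getLast? = W.getLast? ∧ elen V ≡ elen W [MOD γ] ∧ elen V ≤ T

/-- The cycle removal threshold `T_cr^γ(C)` of the subgraph `C` in `G`. -/
def Tcr (G C : SubD n) (γ : ℕ) : ℕ := sInf {T | TcrProp G C γ T}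

/-- The strict cycle removal threshold `T̃_cr^γ(C)` of the subgraph `C` in `G`. -/
def TcrStrict (G C : SubD n) (γ : ℕ) : ℕ := sInf {T | TcrStrictProp G C γ T}

/-- The subgraph formed by the nodes and edges of the walk `W`. -/
def cycleSub (W : List (Fin n)) : SubD n :=
  ⟨{v | v ∈ W}, fun a b => (a, b) ∈ W.zip W.tail⟩

/-- The single-node subgraph `{i}` (with no edges). -/
def singleSub (i : Fin n) : SubD n := ⟨{i}, fun _ _ => False⟩

/-- `λ(M)` as an element of `ℝmax` (`-∞` if `𝒟(M)` has no cycle). -/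
def lamW (M : MPMat n) : WithBot ℝ :=
  sSup {x : WithBot ℝ | ∃ W m, IsCycleIn (digr M) W ∧ meanIs M W m ∧ x = (m : WithBot ℝ)}

end MaxPlus

namespace MaxPlus


/-! ### Auxiliary lemmas for the proof -/

section Aux

variable {n : ℕ}

lemma ww_nil (X : MPMat n) : walkWeight X [] = 0 := rfl

lemma ww_single (X : MPMat n) (a : Fin n) : walkWeight X [a] = 0 := rfl

lemma ww_cons_cons (X : MPMat n) (a b : Fin n) (l : List (Fin n)) :
    walkWeight X (a :: b :: l) = X a b + walkWeight X (b :: l) := by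
  simp [walkWeight]

lemma ww_split (X : MPMat n) (x : Fin n) :
    ∀ l1 l2, walkWeight X (l1 ++ x :: l2) = walkWeight X (l1 ++ [x]) + walkWeight X (x :: l2)
  | [], l2 => by simp [ww_single]
  | [a], l2 => by simp [ww_cons_cons, ww_single, add_assoc]
  | a :: b :: l1, l2 => by
    have h := ww_split X x (b :: l1) l2
    simp only [List.cons_append, ww_cons_cons] at *
    rw [h, add_assoc]

lemma eq_append_of_mem_zip_tail {a b : Fin n} :
    ∀ {l : List (Fin n)}, (a, b) ∈ l.zip l.tail → ∃ l1 l2, l = l1 ++ a :: b :: l2 := by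
  intro l
  induction l with
  | nil => simp
  | cons h t ih =>
    cases t with
    | nil => simp
    | cons h2 t2 =>
      intro hm
      rcases List.mem_cons.mp hm with he | hm2
      · obtain ⟨rfl, rfl⟩ : a = h ∧ b = h2 := by simpa using he
        exact ⟨[], t2, rfl⟩
      · obtain ⟨l1, l2, heq⟩ := ih hm2
        exact ⟨h :: l1, l2, by simp [heq]⟩

lemma rel_of_chain'_zip {R : Fin n → Fin n → Prop} {l : List (Fin n)} {a b : Fin n}
    (hc : l.Chain' R) (hm : (a, b) ∈ l.zip l.tail) : R a b := by
  obtain ⟨l1, l2, rfl⟩ := eq_append_of_mem_zip_tail hm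
  have h2 := (List.isChain_split.mp hc).2
  exact (List.isChain_cons_cons.mp h2).1

lemma exists_dup_decomp : ∀ {l : List (Fin n)}, ¬ l.Nodup →
    ∃ (l1 : List (Fin n)) (x : Fin n) (l2 l3 : List (Fin n)), l = l1 ++ x :: l2 ++ x :: l3 := by
  intro l
  induction l with
  | nil => intro h; exact absurd List.nodup_nil h
  | cons a t ih =>
    intro h
    by_cases ha : a ∈ t
    · obtain ⟨l2, l3, rfl⟩ := List.append_of_mem ha
      exact ⟨[], a, l2, l3, rfl⟩
    · have ht : ¬ t.Nodup := fun hn => h (List.nodup_cons.mpr ⟨ha, hn⟩)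
      obtain ⟨l1, x, l2, l3, heq⟩ := ih ht
      exact ⟨a :: l1, x, l2, l3, by simp [heq]⟩

lemma head?_split (l1 : List (Fin n)) (x : Fin n) (l2 : List (Fin n)) :
    (l1 ++ x :: l2).head? = (l1 ++ [x]).head? := by cases l1 <;> simp

lemma getLast?_mid (l1 : List (Fin n)) (x : Fin n) (l2 : List (Fin n)) :
    (l1 ++ x :: l2).getLast? = (x :: l2).getLast? :=
  List.getLast?_append_of_ne_nil _ (List.cons_ne_nil x l2)

lemma ww_ne_bot {X : MPMat n} :
    ∀ {W : List (Fin n)}, W.Chain' (fun a b => X a b ≠ ⊥) → walkWeight X W ≠ ⊥ := by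
  intro W
  induction W with
  | nil => intro _; simp [ww_nil]
  | cons a t ih =>
    cases t with
    | nil => intro _; simp [ww_single]
    | cons b t2 =>
      intro hc
      rw [ww_cons_cons]
      have h1 := (List.isChain_cons_cons.mp hc).1
      have h2 := ih (List.isChain_cons_cons.mp hc).2
      simp [WithBot.add_eq_bot, h1, h2]

/-- Joining two walks sharing an endpoint. -/
lemma walk_join {R : Fin n → Fin n → Prop} {W1 W2 : List (Fin n)} {h0 : Fin n}
    (c1 : W1.Chain' R) (c2 : W2.Chain' R)
    (h1 : W1.getLast? = some h0) (h2 : W2.head? = some h0) :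
    (W1 ++ W2.tail).Chain' R ∧ (W1 ++ W2.tail).head? = W1.head? ∧
      (W1 ++ W2.tail).getLast? = W2.getLast? ∧
      (∀ X : MPMat n, walkWeight X (W1 ++ W2.tail) = walkWeight X W1 + walkWeight X W2) ∧
      (W1 ++ W2.tail).length + 1 = W1.length + W2.length ∧
      ∀ v ∈ W1 ++ W2.tail, v ∈ W1 ∨ v ∈ W2 := by
  have hW1ne : W1 ≠ [] := by rintro rfl; simp at h1
  have hget : W1.getLast hW1ne = h0 := by
    have h := List.getLast?_eq_getLast hW1ne
    rw [h] at h1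
    exact Option.some_inj.mp h1
  have hd1 : W1.dropLast ++ [h0] = W1 := by
    rw [← hget]; exact List.dropLast_append_getLast hW1ne
  have hW2 : W2 = h0 :: W2.tail := by
    cases W2 with
    | nil => simp at h2
    | cons a t => simp at h2; simp [h2]
  have hkey : W1 ++ W2.tail = W1.dropLast ++ h0 :: W2.tail := by
    conv_lhs => rw [← hd1]
    simp
  have hc1' : (W1.dropLast ++ [h0]).Chain' R := by rw [hd1]; exact c1
  have hc2' : (h0 :: W2.tail).Chain' R := by rw [← hW2]; exact c2
  refine ⟨?_, ?_, ?_, ?_, ?_, ?_⟩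
  · rw [hkey]; exact List.isChain_split.mpr ⟨hc1', hc2'⟩
  · rw [hkey, head?_split, hd1]
  · cases ht : W2.tail with
    | nil =>
      rw [ht] at hW2
      rw [List.append_nil, h1, hW2]
      simp
    | cons a t =>
      rw [List.getLast?_append_of_ne_nil _ (by simp : (a :: t) ≠ [])]
      rw [hW2, ht]
      simp
  · intro X
    rw [hkey, ww_split, hd1]
    conv_rhs => rw [hW2]
  · have := List.length_pos_iff.mpr hW1ne
    have h2len : W2.length = W2.tail.length + 1 := by rw [hW2]; simp
    simp only [List.length_append]
    omega
  · intro v hv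
    rcases List.mem_append.mp hv with h | h
    · exact Or.inl h
    · exact Or.inr (List.mem_of_mem_tail h)

lemma finsetSup_add (s : Finset (Fin n)) (f : Fin n → WithBot ℝ) (c : WithBot ℝ) :
    s.sup f + c = s.sup fun x => f x + c := by
  rw [Finset.comp_sup_eq_sup_comp (fun x : WithBot ℝ => x + c)]
  · rfl
  · intro x y
    exact (monotone_id.add_const c).map_sup x y
  · exact WithBot.bot_add c

lemma add_finsetSup (s : Finset (Fin n)) (f : Fin n → WithBot ℝ) (c : WithBot ℝ) :
    c + s.sup f = s.sup fun x => c + f x := by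
  rw [Finset.comp_sup_eq_sup_comp (fun x : WithBot ℝ => c + x)]
  · rfl
  · intro x y
    exact (monotone_id.const_add c).map_sup x y
  · exact WithBot.add_bot c

lemma mpMul_assoc (A B C : MPMat n) : mpMul (mpMul A B) C = mpMul A (mpMul B C) := by
  funext i j
  show Finset.univ.sup (fun l => (Finset.univ.sup fun k => A i k + B k l) + C l j)
      = Finset.univ.sup fun k => A i k + Finset.univ.sup fun l => B k l + C l j
  simp only [finsetSup_add, add_finsetSup]
  rw [Finset.sup_comm]
  simp only [add_assoc]

lemma I_mpMul (A : MPMat n) : mpMul (mpPow A 0) A = A := by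
  funext i j
  apply le_antisymm
  · apply Finset.sup_le
    intro k _
    show (if i = k then (0:WithBot ℝ) else ⊥) + A k j ≤ A i j
    by_cases h : i = k
    · simp [h]
    · simp [h]
  · have := Finset.le_sup (f := fun k => (if i = k then (0:WithBot ℝ) else ⊥) + A k j)
      (Finset.mem_univ i)
    simp at this; exact this

lemma mpPow_add (X : MPMat n) : ∀ a b, mpPow X (a + b) = mpMul (mpPow X a) (mpPow X b)
  | 0, b => by rw [Nat.zero_add]; exact (I_mpMul _).symm
  | a + 1, b => by
    rw [Nat.succ_add]
    show mpMul X (mpPow X (a + b)) = _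
    rw [mpPow_add X a b]
    show mpMul X (mpMul (mpPow X a) (mpPow X b)) = mpMul (mpMul X (mpPow X a)) (mpPow X b)
    rw [mpMul_assoc]

lemma mpPow_mul (X : MPMat n) (a : ℕ) : ∀ t, mpPow X (a * t) = mpPow (mpPow X a) t
  | 0 => by rw [Nat.mul_zero]; rfl
  | t + 1 => by
    rw [show a * (t + 1) = a + a * t by ring, mpPow_add, mpPow_mul X a t]
    rfl

lemma le_mpMul (X Y : MPMat n) (i k j : Fin n) : X i k + Y k j ≤ mpMul X Y i j :=
  Finset.le_sup (f := fun k => X i k + Y k j) (Finset.mem_univ k)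

/-- Lower bound: any "walk" gives a lower bound for the matrix power entry. -/
lemma ww_le_mpPow (X : MPMat n) :
    ∀ (m : ℕ) (W : List (Fin n)) (i j : Fin n), W.length = m + 1 →
      W.head? = some i → W.getLast? = some j → walkWeight X W ≤ mpPow X m i j := by
  intro m
  induction m with
  | zero =>
    intro W i j hlen hh hl
    match W, hlen with
    | [a], _ =>
      simp at hh hl
      subst hh; subst hl
      simp [ww_single, mpPow]
  | succ m ih =>
    intro W i j hlen hh hl
    match W, hlen with
    | a :: b :: l, hlen =>
      simp at hh
      subst hh
      rw [ww_cons_cons]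
      have hlast : (b :: l).getLast? = some j := by
        rw [← hl]; simp
      have := ih (b :: l) b j (by simpa using hlen) rfl hlast
      calc X a b + walkWeight X (b :: l) ≤ X a b + mpPow X m b j := add_le_add_right this _
        _ ≤ mpMul X (mpPow X m) a j := le_mpMul _ _ _ _ _
        _ = mpPow X (m + 1) a j := rfl

/-- Upper bound: the matrix power entry is attained by some walk. -/
lemma mpPow_eq_ww (X : MPMat n) :
    ∀ (m : ℕ) (i j : Fin n), mpPow X m i j = ⊥ ∨
      ∃ W : List (Fin n), W.length = m + 1 ∧ W.head? = some i ∧ W.getLast? = some j ∧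
        W.Chain' (fun a b => X a b ≠ ⊥) ∧ walkWeight X W = mpPow X m i j := by
  intro m
  induction m with
  | zero =>
    intro i j
    by_cases h : i = j
    · subst h
      exact Or.inr ⟨[i], rfl, rfl, rfl, List.isChain_singleton i, by simp [ww_single, mpPow]⟩
    · left; simp [mpPow, h]
  | succ m ih =>
    intro i j
    obtain ⟨k, -, hk⟩ := Finset.exists_mem_eq_sup (Finset.univ : Finset (Fin n))
      ⟨i, Finset.mem_univ i⟩ (fun k => X i k + mpPow X m k j)
    show mpMul X (mpPow X m) i j = ⊥ ∨ _
    by_cases hbot : X i k + mpPow X m k j = ⊥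
    · left
      show Finset.univ.sup _ = ⊥
      rw [hk, hbot]
    · right
      rw [WithBot.add_eq_bot] at hbot
      push_neg at hbot
      rcases ih k j with h | ⟨W, hlen, hh, hl, hc, hw⟩
      · exact absurd h hbot.2
      · refine ⟨i :: W, by simpa using hlen, rfl, ?_, ?_, ?_⟩
        · rw [← hl]
          cases W with
          | nil => simp at hlen
          | cons a t => simp
        · cases W with
          | nil => simp at hlen
          | cons a t =>
            simp at hh
            subst hh
            exact List.isChain_cons_cons.mpr ⟨hbot.1, hc⟩
        · cases W with
          | nil => simp at hlen
          | cons a t =>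
            simp at hh
            subst hh
            rw [ww_cons_cons, hw]
            exact hk.symm

lemma elen_cons_cons (a b : Fin n) (l : List (Fin n)) :
    elen (a :: b :: l) = elen (b :: l) + 1 := by simp [elen]

lemma ww_shift (A : MPMat n) (c : ℝ) :
    ∀ W : List (Fin n),
      walkWeight (shiftMat A c) W = walkWeight A W + (((elen W : ℝ) * c : ℝ) : WithBot ℝ)
  | [] => by simp [ww_nil, elen]
  | [a] => by simp [ww_single, elen]
  | a :: b :: l => by
    rw [ww_cons_cons, ww_cons_cons, ww_shift A c (b :: l), elen_cons_cons]
    show A a b + (c : WithBot ℝ) + _ = _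
    have hcast : (((elen (b :: l) + 1 : ℕ) : ℝ) * c : ℝ)
        = ((elen (b :: l) : ℝ) * c : ℝ) + c := by push_cast; ring
    rw [hcast, WithBot.coe_add]
    abel

lemma shift_bot_iff (A : MPMat n) (c : ℝ) (u v : Fin n) :
    shiftMat A c u v = ⊥ ↔ A u v = ⊥ := by
  simp [shiftMat, WithBot.add_eq_bot]

/-- Every closed walk in `𝒟(A)` has nonpositive weight after shifting by `-λ`. -/
lemma closed_walk_nonpos {A : MPMat n} {lam : ℝ} (hlam : IsMaxCycleMean A lam) :
    ∀ (N : ℕ) (W : List (Fin n)), W.length ≤ N → W.Chain' (digr A).edge → W ≠ [] →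
      W.head? = W.getLast? → walkWeight (shiftMat A (-lam)) W ≤ 0 := by
  intro N
  induction N with
  | zero =>
    intro W h _ hne _
    cases W with
    | nil => exact absurd rfl hne
    | cons a t => simp at h
  | succ N ih =>
    intro W hlen hc hne hcl
    match W with
    | [a] => simp [ww_single]
    | a :: b :: l =>
      by_cases hnd : (a :: b :: l).dropLast.Nodup
      · -- cycle case
        have hcyc : IsCycleIn (digr A) (a :: b :: l) :=
          ⟨⟨hne, fun v _ => Set.mem_univ v, hc⟩, by simp, hcl, hnd⟩
        have hfin : walkWeight A (a :: b :: l) ≠ ⊥ := ww_ne_bot hc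
        obtain ⟨p, hp⟩ := WithBot.ne_bot_iff_exists.mp hfin
        have hl1 : 1 ≤ elen (a :: b :: l) := by simp [elen]
        have h0 : (0:ℝ) < ((elen (a :: b :: l) : ℕ) : ℝ) := by exact_mod_cast hl1
        have hmean : meanIs A (a :: b :: l) (p / (elen (a :: b :: l) : ℝ)) := by
          unfold meanIs
          rw [← hp]
          congr 1
          rw [mul_comm, div_mul_cancel₀ _ (ne_of_gt h0)]
        have hle := hlam.2 (a :: b :: l) _ hcyc hmean
        rw [ww_shift, ← hp, ← WithBot.coe_add, ← WithBot.coe_zero, WithBot.coe_le_coe]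
        have hple := (div_le_iff₀ h0).mp hle
        nlinarith
      · -- duplicate node: remove a closed subwalk
        obtain ⟨l1, x, l2, l3, hdec⟩ := exists_dup_decomp hnd
        have hz := (List.dropLast_append_getLast hne).symm
        set z := (a :: b :: l).getLast hne with hzdef
        have hdecW : a :: b :: l = l1 ++ x :: (l2 ++ x :: (l3 ++ [z])) := by
          conv_lhs => rw [hz, hdec]
          simp
        have hlenW : (a :: b :: l).length = l1.length + l2.length + l3.length + 3 := by
          rw [hdecW]; simp; omega
        -- chain decomposition
        have hcW : (l1 ++ x :: (l2 ++ x :: (l3 ++ [z]))).Chain' (digr A).edge := by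
          rw [← hdecW]; exact hc
        have hsp1 := List.isChain_split.mp hcW
        have hc2 : ((x :: l2) ++ x :: (l3 ++ [z])).Chain' (digr A).edge := hsp1.2
        have hsp2 := List.isChain_split.mp hc2
        -- the closed piece P
        have hPle : walkWeight (shiftMat A (-lam)) ((x :: l2) ++ [x]) ≤ 0 := by
          refine ih ((x :: l2) ++ [x]) ?_ hsp2.1 (by simp) ?_
          · have h3 := hlenW
            simp at hlen h3 ⊢
            omega
          · rw [List.getLast?_append_of_ne_nil _ (List.cons_ne_nil x [])]
            rfl
        -- the remaining closed walk V
        set V := l1 ++ x :: (l3 ++ [z]) with hV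
        have hVc : V.Chain' (digr A).edge := List.isChain_split.mpr ⟨hsp1.1, hsp2.2⟩
        have hVne : V ≠ [] := by simp [hV]
        have hVhead : V.head? = (a :: b :: l).head? := by
          rw [hV, hdecW, head?_split l1 x (l3 ++ [z]), head?_split l1 x (l2 ++ x :: (l3 ++ [z]))]
        have hgl : ∀ L : List (Fin n), (L ++ [z]).getLast? = some z := fun L => by
          rw [List.getLast?_append_of_ne_nil _ (List.cons_ne_nil z [])]; rfl
        have hVlast : V.getLast? = (a :: b :: l).getLast? := by
          rw [hV, hdecW, getLast?_mid l1 x (l3 ++ [z]), getLast?_mid l1 x (l2 ++ x :: (l3 ++ [z])),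
            show x :: (l2 ++ x :: (l3 ++ [z])) = (x :: (l2 ++ x :: l3)) ++ [z] by simp,
            show x :: (l3 ++ [z]) = (x :: l3) ++ [z] by simp,
            hgl, hgl]
        have hVle : walkWeight (shiftMat A (-lam)) V ≤ 0 := by
          refine ih V ?_ hVc hVne ?_
          · have h3 := hlenW
            rw [hV]
            simp at hlen h3 ⊢
            omega
          · rw [hVhead, hVlast, hcl]
        -- weight comparison
        have e1 : walkWeight (shiftMat A (-lam)) (a :: b :: l)
            = walkWeight (shiftMat A (-lam)) (l1 ++ [x])
              + (walkWeight (shiftMat A (-lam)) ((x :: l2) ++ [x])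
                + walkWeight (shiftMat A (-lam)) (x :: (l3 ++ [z]))) := by
          rw [hdecW, ww_split]
          congr 1
          rw [show x :: (l2 ++ x :: (l3 ++ [z])) = (x :: l2) ++ x :: (l3 ++ [z]) by simp,
            ww_split]
        have e2 : walkWeight (shiftMat A (-lam)) V
            = walkWeight (shiftMat A (-lam)) (l1 ++ [x])
              + walkWeight (shiftMat A (-lam)) (x :: (l3 ++ [z])) := by
          rw [hV, ww_split]
        calc walkWeight (shiftMat A (-lam)) (a :: b :: l)
            = _ := e1
          _ ≤ walkWeight (shiftMat A (-lam)) (l1 ++ [x])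
              + (0 + walkWeight (shiftMat A (-lam)) (x :: (l3 ++ [z]))) :=
            add_le_add_right (add_le_add_left hPle _) _
          _ = walkWeight (shiftMat A (-lam)) V := by rw [zero_add, ← e2]
          _ ≤ 0 := hVle

/-- Uniform upper bound on the entries of all powers of the shifted matrix. -/
lemma entry_bound {A : MPMat n} {lam : ℝ} (hlam : IsMaxCycleMean A lam) :
    ∃ K : ℝ, ∀ (m : ℕ) (i j : Fin n), mpPow (shiftMat A (-lam)) m i j ≤ (K : WithBot ℝ) := by
  obtain ⟨β, hβ0, hβ⟩ : ∃ β : ℝ, 0 ≤ β ∧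
      ∀ u v, shiftMat A (-lam) u v ≤ (β : WithBot ℝ) := by
    have hne : ((Finset.univ : Finset (Fin n × Fin n)).sup
        fun p => shiftMat A (-lam) p.1 p.2) ⊔ (0 : WithBot ℝ) ≠ ⊥ := by
      intro h
      have : (0 : WithBot ℝ) ≤ ⊥ := h ▸ le_sup_right
      simp at this
    obtain ⟨β, hβ⟩ := WithBot.ne_bot_iff_exists.mp hne
    refine ⟨β, ?_, ?_⟩
    · have : (0 : WithBot ℝ) ≤ (β : WithBot ℝ) := hβ ▸ le_sup_right
      exact_mod_cast this
    · intro u v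
      calc shiftMat A (-lam) u v
          ≤ (Finset.univ : Finset (Fin n × Fin n)).sup
            (fun p => shiftMat A (-lam) p.1 p.2) :=
            Finset.le_sup (f := fun p : Fin n × Fin n => shiftMat A (-lam) p.1 p.2)
              (Finset.mem_univ (u, v))
        _ ≤ ((Finset.univ : Finset (Fin n × Fin n)).sup
              fun p => shiftMat A (-lam) p.1 p.2) ⊔ (0 : WithBot ℝ) := le_sup_left
        _ = (β : WithBot ℝ) := hβ.symm
  -- basic weight bound
  have hwb : ∀ W : List (Fin n),
      walkWeight (shiftMat A (-lam)) W ≤ (((elen W : ℝ) * β : ℝ) : WithBot ℝ) := by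
    intro W
    induction W with
    | nil => simp [ww_nil, elen]
    | cons a t ih =>
      cases t with
      | nil => simp [ww_single, elen]
      | cons b l =>
        rw [ww_cons_cons, elen_cons_cons]
        calc shiftMat A (-lam) a b + walkWeight (shiftMat A (-lam)) (b :: l)
            ≤ (β : WithBot ℝ) + (((elen (b :: l) : ℝ) * β : ℝ) : WithBot ℝ) :=
              add_le_add (hβ a b) ih
          _ = ((((elen (b :: l) + 1 : ℕ) : ℝ) * β : ℝ) : WithBot ℝ) := by
              rw [← WithBot.coe_add]
              congr 1
              push_cast
              ring
  -- bound for all chains via closed-walk removal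
  have hmain : ∀ (NN : ℕ) (W : List (Fin n)), W.length ≤ NN → W.Chain' (digr A).edge →
      walkWeight (shiftMat A (-lam)) W ≤ (((n : ℝ) * β : ℝ) : WithBot ℝ) := by
    intro NN
    induction NN with
    | zero =>
      intro W h _
      cases W with
      | nil =>
        rw [ww_nil, ← WithBot.coe_zero, WithBot.coe_le_coe]
        positivity
      | cons a t => simp at h
    | succ NN ih =>
      intro W hlen hc
      by_cases hsmall : W.length ≤ n + 1
      · calc walkWeight (shiftMat A (-lam)) W ≤ (((elen W : ℝ) * β : ℝ) : WithBot ℝ) := hwb W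
          _ ≤ (((n : ℝ) * β : ℝ) : WithBot ℝ) := by
            rw [WithBot.coe_le_coe]
            apply mul_le_mul_of_nonneg_right _ hβ0
            have : elen W ≤ n := by unfold elen at *; omega
            exact_mod_cast this
      · have hnd : ¬ W.Nodup := by
          intro hnd
          have := hnd.length_le_card
          simp at this
          omega
        obtain ⟨l1, x, l2, l3, hdec⟩ := exists_dup_decomp hnd
        have hcW : (l1 ++ x :: (l2 ++ x :: l3)).Chain' (digr A).edge := by
          rw [show l1 ++ x :: (l2 ++ x :: l3) = l1 ++ x :: l2 ++ x :: l3 by simp, ← hdec]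
          exact hc
        have hsp1 := List.isChain_split.mp hcW
        have hc2 : ((x :: l2) ++ x :: l3).Chain' (digr A).edge := hsp1.2
        have hsp2 := List.isChain_split.mp hc2
        have hPle : walkWeight (shiftMat A (-lam)) ((x :: l2) ++ [x]) ≤ 0 :=
          closed_walk_nonpos hlam ((x :: l2) ++ [x]).length _ le_rfl hsp2.1 (by simp)
            (by rw [List.getLast?_append_of_ne_nil _ (List.cons_ne_nil x [])]; rfl)
        have hlen' : W.length = l1.length + l2.length + l3.length + 2 := by
          rw [hdec]; simp; omega
        have hVle : walkWeight (shiftMat A (-lam)) (l1 ++ x :: l3)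
            ≤ (((n : ℝ) * β : ℝ) : WithBot ℝ) := by
          apply ih _ (by simp; omega) (List.isChain_split.mpr ⟨hsp1.1, hsp2.2⟩)
        calc walkWeight (shiftMat A (-lam)) W
            = walkWeight (shiftMat A (-lam)) (l1 ++ [x])
              + (walkWeight (shiftMat A (-lam)) ((x :: l2) ++ [x])
                + walkWeight (shiftMat A (-lam)) (x :: l3)) := by
              rw [hdec, show l1 ++ x :: l2 ++ x :: l3 = l1 ++ x :: (l2 ++ x :: l3) by simp,
                ww_split]
              congr 1
              rw [show x :: (l2 ++ x :: l3) = (x :: l2) ++ x :: l3 by simp, ww_split]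
          _ ≤ walkWeight (shiftMat A (-lam)) (l1 ++ [x])
              + (0 + walkWeight (shiftMat A (-lam)) (x :: l3)) :=
            add_le_add_right (add_le_add_left hPle _) _
          _ = walkWeight (shiftMat A (-lam)) (l1 ++ x :: l3) := by rw [zero_add, ← ww_split]
          _ ≤ _ := hVle
  refine ⟨(n : ℝ) * β, ?_⟩
  intro m i j
  rcases mpPow_eq_ww (shiftMat A (-lam)) m i j with h | ⟨W, _, _, _, hc, hw⟩
  · rw [h]; exact bot_le
  · rw [← hw]
    apply hmain W.length W le_rfl
    exact hc.imp fun {a b} h => by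
      intro hb
      exact h ((shift_bot_iff A (-lam) a b).mpr hb)

lemma iSup_add_le {f : ℕ → WithBot ℝ} (c : ℝ) (d : WithBot ℝ)
    (h : ∀ t, f t + (c : WithBot ℝ) ≤ d) : (⨆ t, f t) + (c : WithBot ℝ) ≤ d := by
  by_cases hall : ∀ t, f t = ⊥
  · have hb : (⨆ t, f t) ≤ ⊥ := ciSup_le fun t => (hall t).le
    rw [le_bot_iff] at hb
    rw [hb, WithBot.bot_add]
    exact bot_le
  · push_neg at hall
    obtain ⟨t0, ht0⟩ := hall
    obtain ⟨x0, hx0⟩ := WithBot.ne_bot_iff_exists.mp ht0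
    have hd : d ≠ ⊥ := by
      intro hdb
      have h0 := h t0
      rw [← hx0, hdb, ← WithBot.coe_add, le_bot_iff] at h0
      exact WithBot.coe_ne_bot h0
    obtain ⟨e, he⟩ := WithBot.ne_bot_iff_exists.mp hd
    have hf : ∀ t, f t ≤ ((e - c : ℝ) : WithBot ℝ) := by
      intro t
      rcases eq_or_ne (f t) ⊥ with hb | hb
      · rw [hb]; exact bot_le
      · obtain ⟨x, hx⟩ := WithBot.ne_bot_iff_exists.mp hb
        have h0 := h t
        rw [← hx, ← he, ← WithBot.coe_add, WithBot.coe_le_coe] at h0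
        rw [← hx, WithBot.coe_le_coe]
        linarith
    calc (⨆ t, f t) + (c : WithBot ℝ) ≤ ((e - c : ℝ) : WithBot ℝ) + (c : WithBot ℝ) :=
        add_le_add_left (ciSup_le hf) _
      _ = (e : WithBot ℝ) := by rw [← WithBot.coe_add]; congr 1; ring
      _ = d := he

lemma le_add_neg {x y : WithBot ℝ} {c : ℝ} (h : x + (c : WithBot ℝ) ≤ y) :
    x ≤ y + ((-c : ℝ) : WithBot ℝ) := by
  rcases eq_or_ne x ⊥ with rfl | hx
  · exact bot_le
  obtain ⟨a, ha⟩ := WithBot.ne_bot_iff_exists.mp hx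
  rcases eq_or_ne y ⊥ with rfl | hy
  · rw [← ha, ← WithBot.coe_add, le_bot_iff] at h
    exact absurd h WithBot.coe_ne_bot
  obtain ⟨b, hb⟩ := WithBot.ne_bot_iff_exists.mp hy
  rw [← ha, ← hb, ← WithBot.coe_add] at h ⊢
  rw [WithBot.coe_le_coe] at h ⊢
  linarith

lemma edge_mem_verts {G : SubD n} (hGcr : CompletelyReducible G) {u v : Fin n}
    (h : G.edge u v) : u ∈ G.verts ∧ v ∈ G.verts := by
  obtain ⟨W, hW, hh, hl⟩ := hGcr u v h
  have hv : v ∈ W := List.mem_of_mem_head? (Option.mem_def.mpr hh)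
  have hu : u ∈ W := List.mem_of_mem_getLast? (Option.mem_def.mpr hl)
  exact ⟨hW.2.1 u hu, hW.2.1 v hv⟩

lemma csrS_eq {A : MPMat n} {lam : ℝ} {G : SubD n} {u v : Fin n} (h : G.edge u v) :
    csrS A lam G u v = shiftMat A (-lam) u v := by
  simp only [csrS, shiftMat, if_pos h]

lemma csrS_edge {A : MPMat n} {lam : ℝ} {G : SubD n} {u v : Fin n}
    (h : csrS A lam G u v ≠ ⊥) : G.edge u v := by
  by_contra hg
  exact h (by simp only [csrS, if_neg hg])

lemma G_edge_ne_bot {A : MPMat n} {lam : ℝ} {G : SubD n} (hGle : SubLE G (critSub A lam))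
    {u v : Fin n} (h : G.edge u v) : A u v ≠ ⊥ := by
  obtain ⟨Z, hZ, _, hmem⟩ := hGle.2 u v h
  exact rel_of_chain'_zip hZ.1.2.2 hmem

lemma ww_eq_of_chain {X Y : MPMat n} {R : Fin n → Fin n → Prop}
    (hXY : ∀ a b, R a b → X a b = Y a b) :
    ∀ {W : List (Fin n)}, W.Chain' R → walkWeight X W = walkWeight Y W := by
  intro W
  induction W with
  | nil => intro _; rfl
  | cons a t ih =>
    cases t with
    | nil => intro _; rfl
    | cons b l =>
      intro hc
      rw [ww_cons_cons, ww_cons_cons, hXY a b (List.isChain_cons_cons.mp hc).1,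
        ih (List.isChain_cons_cons.mp hc).2]

/-- The complement of a critical edge inside its critical cycle. -/
lemma crit_complement {A : MPMat n} {lam : ℝ} {u v : Fin n} (h : critEdges A lam u v) :
    ∃ Q : List (Fin n), Q.Chain' (digr A).edge ∧ Q ≠ [] ∧ Q.head? = some v ∧
      Q.getLast? = some u ∧
      walkWeight (shiftMat A (-lam)) Q + shiftMat A (-lam) u v = 0 := by
  obtain ⟨Z, hZcyc, hmean, hmem⟩ := h
  obtain ⟨l1, l2, hdec⟩ := eq_append_of_mem_zip_tail hmem
  have hwz : walkWeight (shiftMat A (-lam)) Z = 0 := by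
    have hr : ((elen Z : ℝ) * lam + (elen Z : ℝ) * (-lam) : ℝ) = 0 := by ring
    rw [ww_shift, hmean, ← WithBot.coe_add, hr, WithBot.coe_zero]
  have hchain : Z.Chain' (digr A).edge := hZcyc.1.2.2
  have hcl : Z.head? = Z.getLast? := hZcyc.2.2.1
  have hcW : (l1 ++ u :: (v :: l2)).Chain' (digr A).edge := by rw [← hdec]; exact hchain
  have hsp1 := List.isChain_split.mp hcW
  have c2 : (v :: l2).Chain' (digr A).edge := (List.isChain_cons_cons.mp hsp1.2).2
  obtain ⟨h0, hh0⟩ : ∃ h0, (v :: l2).getLast? = some h0 := by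
    cases hgl : (v :: l2).getLast? with
    | none => exact absurd hgl (by simp)
    | some a => exact ⟨a, rfl⟩
  have hza : Z.getLast? = some h0 := by
    rw [hdec, getLast?_mid, show u :: v :: l2 = [u] ++ v :: l2 by simp, getLast?_mid [u] v l2]
    exact hh0
  have hzh : Z.head? = some h0 := by rw [hcl]; exact hza
  have hl1u : (l1 ++ [u]).head? = some h0 := by
    rw [← head?_split l1 u (v :: l2), ← hdec]
    exact hzh
  obtain ⟨jc, jh, jl, jw, _, _⟩ := walk_join c2 hsp1.1 hh0 hl1u
  refine ⟨(v :: l2) ++ (l1 ++ [u]).tail, jc, by simp, by rw [jh]; rfl, ?_, ?_⟩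
  · rw [jl]; simp
  · rw [jw]
    have e1 : walkWeight (shiftMat A (-lam)) Z
        = walkWeight (shiftMat A (-lam)) (l1 ++ [u])
          + (shiftMat A (-lam) u v + walkWeight (shiftMat A (-lam)) (v :: l2)) := by
      rw [hdec, ww_split, ww_cons_cons]
    rw [e1] at hwz
    calc walkWeight (shiftMat A (-lam)) (v :: l2) + walkWeight (shiftMat A (-lam)) (l1 ++ [u])
          + shiftMat A (-lam) u v
        = walkWeight (shiftMat A (-lam)) (l1 ++ [u])
          + (shiftMat A (-lam) u v + walkWeight (shiftMat A (-lam)) (v :: l2)) := by abel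
      _ = 0 := hwz

/-- Reversal of a walk in `G` with opposite weight. -/
lemma rev_walk {A : MPMat n} {lam : ℝ} {G : SubD n} (hGle : SubLE G (critSub A lam)) :
    ∀ W : List (Fin n), W.Chain' G.edge → W ≠ [] →
      ∃ Q : List (Fin n), Q.Chain' (digr A).edge ∧ Q ≠ [] ∧ Q.head? = W.getLast? ∧
        Q.getLast? = W.head? ∧
        walkWeight (shiftMat A (-lam)) Q + walkWeight (shiftMat A (-lam)) W = 0 := by
  intro W
  induction W with
  | nil => intro _ h; exact absurd rfl h
  | cons a t ih =>
    cases t with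
    | nil =>
      intro _ _
      exact ⟨[a], List.isChain_singleton a, by simp, by simp, by simp,
        by simp [ww_single]⟩
    | cons b l =>
      intro hc _
      have hedge : G.edge a b := (List.isChain_cons_cons.mp hc).1
      obtain ⟨Q1, hQ1c, hQ1ne, hQ1h, hQ1l, hQ1w⟩ := crit_complement (hGle.2 a b hedge)
      obtain ⟨Q2, hQ2c, hQ2ne, hQ2h, hQ2l, hQ2w⟩ :=
        ih (List.isChain_cons_cons.mp hc).2 (by simp)
      obtain ⟨jc, jh, jl, jw, _, _⟩ := walk_join hQ2c hQ1c (by rw [hQ2l]; rfl) hQ1h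
      refine ⟨Q2 ++ Q1.tail, jc, ?_, ?_, ?_, ?_⟩
      · intro hnil
        exact hQ2ne (List.append_eq_nil_iff.mp hnil).1
      · rw [jh, hQ2h]
        simp
      · rw [jl, hQ1l]
        rfl
      · rw [jw]
        have hre : walkWeight (shiftMat A (-lam)) Q2 + walkWeight (shiftMat A (-lam)) Q1
              + walkWeight (shiftMat A (-lam)) (a :: b :: l)
            = (walkWeight (shiftMat A (-lam)) Q1 + shiftMat A (-lam) a b)
              + (walkWeight (shiftMat A (-lam)) Q2 + walkWeight (shiftMat A (-lam)) (b :: l)) := by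
          rw [ww_cons_cons]
          abel
        rw [hre, hQ1w, hQ2w, add_zero]

/-- Closed walks in `G` have weight exactly `0` after shifting by `-λ`. -/
lemma closed_G_zero {A : MPMat n} {lam : ℝ} {G : SubD n} (hlam : IsMaxCycleMean A lam)
    (hGle : SubLE G (critSub A lam)) :
    ∀ W : List (Fin n), W.Chain' G.edge → W ≠ [] → W.head? = W.getLast? →
      walkWeight (shiftMat A (-lam)) W = 0 := by
  intro W hc hne hcl
  have hcA : W.Chain' (digr A).edge := hc.imp fun {a b} h => G_edge_ne_bot hGle h
  have h1 := closed_walk_nonpos hlam W.length W le_rfl hcA hne hcl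
  obtain ⟨Q, hQc, hQne, hQh, hQl, hQw⟩ := rev_walk hGle W hc hne
  have hQcl : Q.head? = Q.getLast? := by rw [hQh, hQl, hcl]
  have h2 := closed_walk_nonpos hlam Q.length Q le_rfl hQc hQne hQcl
  have hWb : walkWeight (shiftMat A (-lam)) W ≠ ⊥ := by
    intro hb
    rw [hb, WithBot.add_bot] at hQw
    simp at hQw
  have hQb : walkWeight (shiftMat A (-lam)) Q ≠ ⊥ := by
    intro hb
    rw [hb, WithBot.bot_add] at hQw
    simp at hQw
  obtain ⟨x, hx⟩ := WithBot.ne_bot_iff_exists.mp hWb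
  obtain ⟨y, hy⟩ := WithBot.ne_bot_iff_exists.mp hQb
  rw [← hx, ← hy, ← WithBot.coe_add, ← WithBot.coe_zero, WithBot.coe_inj] at hQw
  rw [← hx, ← WithBot.coe_zero, WithBot.coe_le_coe] at h1
  rw [← hy, ← WithBot.coe_zero, WithBot.coe_le_coe] at h2
  rw [← hx, ← WithBot.coe_zero, WithBot.coe_inj]
  linarith

/-- Rotation of a closed walk to start at any of its nodes. -/
lemma walk_rotate {G : SubD n} {W : List (Fin n)} (hne : W ≠ [])
    (hc : W.Chain' G.edge) (hmem : ∀ v ∈ W, v ∈ G.verts) (hcl : W.head? = W.getLast?)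
    {v : Fin n} (hv : v ∈ W) :
    ∃ W' : List (Fin n), W'.Chain' G.edge ∧ (∀ u ∈ W', u ∈ G.verts) ∧ W'.head? = some v ∧
      W'.getLast? = some v ∧ W'.length = W.length := by
  obtain ⟨l1, l2, hdec⟩ := List.append_of_mem hv
  cases l1 with
  | nil =>
    refine ⟨W, hc, hmem, ?_, ?_, rfl⟩
    · rw [hdec]; rfl
    · rw [← hcl, hdec]; rfl
  | cons a t =>
    have hcW : ((a :: t) ++ v :: l2).Chain' G.edge := by rw [← hdec]; exact hc
    have hsp := List.isChain_split.mp hcW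
    have hh : W.head? = some a := by rw [hdec]; rfl
    have h1 : (v :: l2).getLast? = some a := by
      rw [← getLast?_mid (a :: t) v l2, ← hdec, ← hcl]
      exact hh
    have h2 : ((a :: t) ++ [v]).head? = some a := by simp
    obtain ⟨jc, jh, jl, _, jlen, jmem⟩ := walk_join hsp.2 hsp.1 h1 h2
    refine ⟨(v :: l2) ++ ((a :: t) ++ [v]).tail, jc, ?_, ?_, ?_, ?_⟩
    · intro u hu
      rcases jmem u hu with h | h
      · exact hmem u (by rw [hdec]; exact List.mem_append_right _ h)
      · rcases List.mem_append.mp h with h' | h'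
        · exact hmem u (by rw [hdec]; exact List.mem_append_left _ h')
        · simp at h'
          subst h'
          exact hmem u hv
    · rw [jh]; rfl
    · rw [jl, List.getLast?_append_of_ne_nil _ (List.cons_ne_nil v [])]
      rfl
    · have hW : W.length = t.length + l2.length + 2 := by
        rw [hdec]
        simp only [List.length_append, List.length_cons]
        omega
      have e1 : (v :: l2).length = l2.length + 1 := by simp
      have e2 : ((a :: t) ++ [v]).length = t.length + 2 := by simp
      omega

/-- Repeating a closed walk. -/
lemma walk_repeat {G : SubD n} {W : List (Fin n)} {v : Fin n}
    (hc : W.Chain' G.edge) (hmem : ∀ u ∈ W, u ∈ G.verts)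
    (hh : W.head? = some v) (hl : W.getLast? = some v) :
    ∀ m : ℕ, ∃ W' : List (Fin n), W'.Chain' G.edge ∧ (∀ u ∈ W', u ∈ G.verts) ∧
      W'.head? = some v ∧ W'.getLast? = some v ∧ elen W' = elen W * (m + 1)
  | 0 => ⟨W, hc, hmem, hh, hl, by rw [Nat.mul_one]⟩
  | m + 1 => by
    obtain ⟨W', hc', hmem', hh', hl', hlen'⟩ := walk_repeat hc hmem hh hl m
    obtain ⟨jc, jh, jl, _, jlen, jmem⟩ := walk_join hc hc' hl hh'
    have hWne : W ≠ [] := by rintro rfl; simp at hh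
    have hW'ne : W' ≠ [] := by rintro rfl; simp at hh'
    have hW1 := List.length_pos_iff.mpr hWne
    have hW2 := List.length_pos_iff.mpr hW'ne
    refine ⟨W ++ W'.tail, jc, ?_, by rw [jh, hh], by rw [jl, hl'], ?_⟩
    · intro u hu
      rcases jmem u hu with h | h
      · exact hmem u h
      · exact hmem' u h
    · have he : elen (W ++ W'.tail) = elen W + elen W' := by
        unfold elen
        omega
      rw [he, hlen']
      ring

lemma exists_last_two (V : List (Fin n)) (h : 2 ≤ V.length) :
    ∃ (l : List (Fin n)) (a b : Fin n), V = l ++ [a, b] := by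
  cases hr : V.reverse with
  | nil =>
    rw [List.reverse_eq_nil_iff] at hr
    subst hr
    simp at h
  | cons b t2 =>
    cases t2 with
    | nil =>
      have : V.length = 1 := by
        have := congrArg List.length hr
        simpa using this
      omega
    | cons a t3 =>
      refine ⟨t3.reverse, a, b, ?_⟩
      have := congrArg List.reverse hr
      simpa using this

lemma split_at (W : List (Fin n)) (p : ℕ) (hp : p < W.length) :
    ∃ (L1 L2 : List (Fin n)) (x : Fin n), W = L1 ++ x :: L2 ∧ L1.length = p := by
  refine ⟨W.take p, W.drop (p + 1), W.get ⟨p, hp⟩, ?_, by simp [Nat.le_of_lt hp]⟩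
  conv_lhs => rw [← List.take_append_drop p W]
  congr 1
  rw [List.drop_eq_getElem_cons hp]
  rfl

/-- The key identity `C ⊗ S^γ = C`. -/
lemma csrC_mul_S_pow (A : MPMat n) (lam : ℝ) (hlam : IsMaxCycleMean A lam)
    (G : SubD n) (hGle : SubLE G (critSub A lam)) (hGcr : CompletelyReducible G)
    (hGnt : NoTrivialScc G) (hγ : 0 < graphCyclicity G) :
    mpMul (csrC A lam G) (mpPow (csrS A lam G) (graphCyclicity G)) = csrC A lam G := by
  set γ := graphCyclicity G with hγdef
  set B := shiftMat A (-lam) with hB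
  set N : MPMat n := mpPow B γ with hN
  set S := csrS A lam G with hS
  set M := csrM A lam G with hM
  have hMeq : ∀ i j, M i j = ⨆ t, mpPow N t i j := fun i j => rfl
  obtain ⟨K, hK⟩ := entry_bound (A := A) hlam
  have hbdd : ∀ i j, BddAbove (Set.range fun t => mpPow N t i j) := by
    intro i j
    refine ⟨(K : WithBot ℝ), ?_⟩
    rintro x ⟨t, rfl⟩
    show mpPow N t i j ≤ (K : WithBot ℝ)
    rw [hN, ← mpPow_mul]
    exact hK _ _ _
  have hleM : ∀ t i j, mpPow N t i j ≤ M i j := by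
    intro t i j
    rw [hMeq]
    exact le_ciSup (hbdd i j) t
  have hMle : ∀ i j (d : WithBot ℝ), (∀ t, mpPow N t i j ≤ d) → M i j ≤ d := by
    intro i j d h
    rw [hMeq]
    exact ciSup_le h
  have hSedge : ∀ u v, S u v ≠ ⊥ → G.edge u v := fun u v h => csrS_edge h
  have hGB : ∀ a b, G.edge a b → S a b = B a b := fun a b h => csrS_eq h
  have hGBne : ∀ a b, G.edge a b → B a b ≠ ⊥ := by
    intro a b h hb
    rw [hB, shift_bot_iff] at hb
    exact G_edge_ne_bot hGle h hb
  funext i j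
  show Finset.univ.sup (fun k => csrC A lam G i k + mpPow S γ k j) = csrC A lam G i j
  apply le_antisymm
  · -- ≤ direction
    apply Finset.sup_le
    intro k _
    by_cases hCik : csrC A lam G i k = ⊥
    · rw [hCik, WithBot.bot_add]; exact bot_le
    by_cases hSkj : mpPow S γ k j = ⊥
    · rw [hSkj, WithBot.add_bot]; exact bot_le
    have hkv : k ∈ G.verts := by
      by_contra h
      exact hCik (by simp only [csrC, if_neg h])
    have hCik' : csrC A lam G i k = M i k := by
      rw [hM]
      simp only [csrC, if_pos hkv]
    rcases mpPow_eq_ww S γ k j with h | ⟨V, hVlen, hVh, hVl, hVc, hVw⟩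
    · exact absurd h hSkj
    have hVG : V.Chain' G.edge := hVc.imp fun {a b} h => hSedge a b h
    have hjv : j ∈ G.verts := by
      obtain ⟨l', u, b, hdecV⟩ := exists_last_two V (by omega)
      have hbj : b = j := by
        have : V.getLast? = some b := by rw [hdecV]; simp
        rw [hVl] at this
        exact (Option.some_inj.mp this).symm
      subst hbj
      have hcV : (l' ++ u :: [b]).Chain' G.edge := by
        rw [show l' ++ u :: [b] = l' ++ [u, b] from rfl, ← hdecV]
        exact hVG
      have := (List.isChain_split.mp hcV).2
      have hub : G.edge u b := (List.isChain_cons_cons.mp this).1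
      exact (edge_mem_verts hGcr hub).2
    have hCij' : csrC A lam G i j = M i j := by
      rw [hM]
      simp only [csrC, if_pos hjv]
    rw [hCik', hCij']
    have hwwne : walkWeight S V ≠ ⊥ := by rw [hVw]; exact hSkj
    obtain ⟨c, hc⟩ := WithBot.ne_bot_iff_exists.mp hwwne
    have hSB : walkWeight S V = walkWeight B V := ww_eq_of_chain hGB hVG
    rw [← hVw, ← hc, hMeq]
    apply iSup_add_le
    intro t
    have h1 : walkWeight B V ≤ mpPow B γ k j := ww_le_mpPow B γ V k j hVlen hVh hVl
    calc mpPow N t i k + (c : WithBot ℝ)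
        = mpPow B (γ * t) i k + walkWeight B V := by
          rw [hN, ← mpPow_mul, hc, hSB]
      _ ≤ mpPow B (γ * t) i k + mpPow B γ k j := add_le_add_right h1 _
      _ ≤ mpPow B (γ * t + γ) i j := by rw [mpPow_add]; exact le_mpMul _ _ _ _ _
      _ = mpPow N (t + 1) i j := by
          rw [hN, ← mpPow_mul, show γ * (t + 1) = γ * t + γ by ring]
      _ ≤ M i j := hleM _ _ _
  · -- ≥ direction
    by_cases hCij : csrC A lam G i j = ⊥
    · rw [hCij]; exact bot_le
    have hjv : j ∈ G.verts := by
      by_contra h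
      exact hCij (by simp only [csrC, if_neg h])
    have hCij' : csrC A lam G i j = M i j := by
      rw [hM]
      simp only [csrC, if_pos hjv]
    -- a cycle of G through j, rotated to start at j
    obtain ⟨Z, hZcyc, hjZ⟩ := hGnt j hjv
    obtain ⟨W1, hW1c, hW1mem, hW1h, hW1l, hW1len⟩ :=
      walk_rotate hZcyc.1.1 hZcyc.1.2.2 hZcyc.1.2.1 hZcyc.2.2.1 hjZ
    have hZlen := hZcyc.2.1
    have hL1 : 1 ≤ elen W1 := by
      unfold elen
      omega
    -- repeat it γ times
    obtain ⟨W0, hW0c, hW0mem, hW0h, hW0l, hW0len⟩ := walk_repeat hW1c hW1mem hW1h hW1l (γ - 1)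
    set L := elen W1 with hLdef
    have hW0len' : elen W0 = L * γ := by
      rw [hW0len]
      congr 1
      omega
    have hW0ne : W0 ≠ [] := by rintro rfl; simp at hW0h
    have hW0w : walkWeight B W0 = 0 :=
      closed_G_zero hlam hGle W0 hW0c hW0ne (by rw [hW0h, hW0l])
    -- lengths
    have hW0length : W0.length = L * γ + 1 := by
      have := List.length_pos_iff.mpr hW0ne
      unfold elen at hW0len'
      omega
    have hLγ : (L - 1) * γ + γ = L * γ := by
      have h1 : L - 1 + 1 = L := by omega
      calc (L - 1) * γ + γ = ((L - 1) + 1) * γ := by ring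
        _ = L * γ := by rw [h1]
    set p := (L - 1) * γ with hp
    have hplt : p < W0.length := by omega
    obtain ⟨L1, L2, x, hdec, hL1len⟩ := split_at W0 p hplt
    have hlens : L1.length + L2.length + 1 = W0.length := by
      rw [hdec]
      simp only [List.length_append, List.length_cons]
      omega
    -- the two pieces
    have hcW0 : (L1 ++ x :: L2).Chain' G.edge := by rw [← hdec]; exact hW0c
    have hsp := List.isChain_split.mp hcW0
    -- piece 1 : from j to x, elen = (L-1)*γ
    have hP1h : (L1 ++ [x]).head? = some j := by
      rw [← head?_split L1 x L2, ← hdec, hW0h]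
    have hP1l : (L1 ++ [x]).getLast? = some x := by simp
    have hP1len : (L1 ++ [x]).length = p + 1 := by simp [hL1len]
    -- piece 2 : from x to j, elen = γ
    have hP2h : (x :: L2).head? = some x := rfl
    have hP2l : (x :: L2).getLast? = some j := by
      rw [← getLast?_mid L1 x L2, ← hdec, hW0l]
    have hP2len : (x :: L2).length = γ + 1 := by
      simp only [List.length_cons]
      omega
    -- x is a vertex of G
    have hxv : x ∈ G.verts := hW0mem x (by rw [hdec]; exact List.mem_append_right _ (by simp))
    have hCix : csrC A lam G i x = M i x := by
      rw [hM]
      simp only [csrC, if_pos hxv]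
    -- weights
    have hP1G : (L1 ++ [x]).Chain' G.edge := hsp.1
    have hP2G : (x :: L2).Chain' G.edge := hsp.2
    have hP1ne : walkWeight B (L1 ++ [x]) ≠ ⊥ :=
      ww_ne_bot (hP1G.imp fun {a b} h => hGBne a b h)
    have hP2ne : walkWeight B (x :: L2) ≠ ⊥ :=
      ww_ne_bot (hP2G.imp fun {a b} h => hGBne a b h)
    obtain ⟨w1, hw1⟩ := WithBot.ne_bot_iff_exists.mp hP1ne
    obtain ⟨w2, hw2⟩ := WithBot.ne_bot_iff_exists.mp hP2ne
    have hsum : w1 + w2 = 0 := by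
      have : walkWeight B W0 = walkWeight B (L1 ++ [x]) + walkWeight B (x :: L2) := by
        rw [hdec, ww_split]
      rw [hW0w, ← hw1, ← hw2, ← WithBot.coe_add] at this
      exact_mod_cast this.symm
    -- M i j ≤ M i x + w2
    have hclaim : M i j ≤ M i x + (w2 : WithBot ℝ) := by
      apply hMle
      intro t
      have hkey : mpPow N t i j + (w1 : WithBot ℝ) ≤ M i x := by
        have h1 : (w1 : WithBot ℝ) ≤ mpPow B p j x := by
          rw [hw1]
          exact ww_le_mpPow B p (L1 ++ [x]) j x hP1len hP1h hP1l
        calc mpPow N t i j + (w1 : WithBot ℝ)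
            ≤ mpPow B (γ * t) i j + mpPow B p j x := by
              rw [hN, ← mpPow_mul]
              exact add_le_add_right h1 _
          _ ≤ mpPow B (γ * t + p) i x := by rw [mpPow_add]; exact le_mpMul _ _ _ _ _
          _ = mpPow N (t + (L - 1)) i x := by
              rw [hN, ← mpPow_mul, show γ * (t + (L - 1)) = γ * t + p from by rw [hp]; ring]
          _ ≤ M i x := hleM _ _ _
      have h2 := le_add_neg hkey
      rwa [show (-w1 : ℝ) = w2 by linarith] at h2
    -- lower bound for the S-power entry
    have hSw2 : (w2 : WithBot ℝ) ≤ mpPow S γ x j := by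
      have hww : walkWeight S (x :: L2) = walkWeight B (x :: L2) := ww_eq_of_chain hGB hP2G
      rw [hw2, ← hww]
      exact ww_le_mpPow S γ (x :: L2) x j hP2len hP2h hP2l
    calc csrC A lam G i j = M i j := hCij'
      _ ≤ M i x + (w2 : WithBot ℝ) := hclaim
      _ ≤ M i x + mpPow S γ x j := add_le_add_right hSw2 _
      _ = csrC A lam G i x + mpPow S γ x j := by rw [hCix]
      _ ≤ _ := Finset.le_sup (f := fun k => csrC A lam G i k + mpPow S γ k j)
          (Finset.mem_univ x)

end Aux

/-- For irreducible `A`, the sequence `(CS^tR)_{t≥0}` is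
purely periodic with period `γ(G)`. -/
theorem csr_purely_periodic {n : ℕ} (A : MPMat n) (lam : ℝ)
    (hlam : IsMaxCycleMean A lam) (hirr : IrreducibleMat A)
    (G : SubD n) (hGle : SubLE G (critSub A lam)) (hGcr : CompletelyReducible G)
    (hGnt : NoTrivialScc G) :
    ∀ (t : ℕ) (i j : Fin n),
      csr A lam G (t + graphCyclicity G) i j = csr A lam G t i j := by
  intro t i j
  rcases Nat.eq_zero_or_pos (graphCyclicity G) with h0 | hγ
  · rw [h0, Nat.add_zero]
  · have hkey := csrC_mul_S_pow A lam hlam G hGle hGcr hGnt hγ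
    unfold csr
    rw [show t + graphCyclicity G = graphCyclicity G + t from Nat.add_comm _ _,
      mpPow_add, ← mpMul_assoc, hkey]

end MaxPlus
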